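/- Let X and Y be schemes with X integral and Y separated, and let f, g : X → Y be two morphisms. If f and g send the generic point η of X to the same point y ∈ Y, and f and g induce the same field homomorphism κ(y) → κ(η) on residue fields, then f = g. -/

import Mathlib

open AlgebraicGeometry CategoryTheory

/-- If `X` is integral, `Y` is separated, and two morphisms `f, g : X ⟶ Y` send the generic
point `η` of `X` to the same point and induce the same homomorphism `κ(y) → κ(η)` on residue
fields, then `f = g`. -/
theorem stmt_6 {X Y : Scheme} [IsIntegral X] [Y.IsSeparated] (f g : X ⟶ Y)
    (h : f.base (genericPoint X) = g.base (genericPoint X))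
    (hres : f.residueFieldMap (genericPoint X) =
      eqToHom (by rw [h]) ≫ g.residueFieldMap (genericPoint X)) : f = g := by
  have hdom : IsDominant (X.fromSpecResidueField (genericPoint X)) := by
    constructor
    rw [DenseRange, Scheme.range_fromSpecResidueField]
    rw [dense_iff_closure_eq]
    exact genericPoint_spec _
  apply ext_of_isDominant (X.fromSpecResidueField (genericPoint X))
  rw [← Scheme.Hom.SpecMap_residueFieldMap_fromSpecResidueField,
    ← Scheme.Hom.SpecMap_residueFieldMap_fromSpecResidueField, hres, Spec.map_comp,
    Category.assoc]
  congr 1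
  have : eqToHom (show Y.residueField (f.base (genericPoint X)) =
      Y.residueField (g.base (genericPoint X)) by rw [h]) =
      (Y.residueFieldCongr h).hom := rfl
  rw [this, Scheme.residueFieldCongr_fromSpecResidueField]
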